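/- For any complex number a and τ tending to 0 along the positive imaginary axis, ϑ₁₁(τ, aτ) is asymptotic to −(−iτ)^{−1/2} · 2i·sin(aπ) · e^{−πi/(4τ)} (ratio tending to 1 as τ ↓ 0), provided sin(aπ) ≠ 0. -/

import Mathlib

open Real Complex Filter Topology

noncomputable section

noncomputable def theta00 (τ z : ℂ) : ℂ :=
  ∑' n : ℤ, Complex.exp (2*(π:ℂ)*Complex.I*(n:ℂ)*z) *
    Complex.exp (2*(π:ℂ)*Complex.I*τ*((n:ℂ)^2/2))

noncomputable def theta01 (τ z : ℂ) : ℂ :=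
  ∑' n : ℤ, (-1:ℂ)^n * Complex.exp (2*(π:ℂ)*Complex.I*(n:ℂ)*z) *
    Complex.exp (2*(π:ℂ)*Complex.I*τ*((n:ℂ)^2/2))

noncomputable def theta10 (τ z : ℂ) : ℂ :=
  ∑' n : ℤ, Complex.exp (2*(π:ℂ)*Complex.I*((n:ℂ)+1/2)*z) *
    Complex.exp (2*(π:ℂ)*Complex.I*τ*((1/2)*((n:ℂ)+1/2)^2))

noncomputable def theta11 (τ z : ℂ) : ℂ :=
  Complex.I * ∑' n : ℤ, (-1:ℂ)^n * Complex.exp (2*(π:ℂ)*Complex.I*((n:ℂ)+1/2)*z) *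
    Complex.exp (2*(π:ℂ)*Complex.I*τ*((1/2)*((n:ℂ)+1/2)^2))

lemma termf (a : ℂ) {T : ℝ} (hT : 0 < T) (n : ℤ) :
    jacobiTheta₂_term n (a + 1/2 + 1/(2*(Complex.I*T))) (-1/(Complex.I*T))
      = Complex.exp (2*(π:ℂ)*Complex.I*(n:ℂ)*(a + 1/2)) *
        (Real.exp (-(π*((n:ℝ)^2 - n))/T) : ℂ) := by
  rw [jacobiTheta₂_term, Complex.ofReal_exp, ← Complex.exp_add]
  congr 1
  have hT' : (T:ℂ) ≠ 0 := Complex.ofReal_ne_zero.mpr hT.ne'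
  have h3 : (Complex.I)^3 = -Complex.I := by simp [pow_succ, Complex.I_sq]
  push_cast
  field_simp
  ring_nf


lemma lemA (τ z : ℂ) : theta11 τ z
    = Complex.I * (Complex.exp ((π:ℂ)*Complex.I*τ/4 + (π:ℂ)*Complex.I*z) *
      jacobiTheta₂ (z + (1+τ)/2) τ) := by
  rw [theta11]
  congr 1
  rw [jacobiTheta₂, ← tsum_mul_left]
  refine tsum_congr fun n => ?_
  have h1 : ((-1:ℂ))^n = Complex.exp ((n:ℂ) * ((π:ℂ)*Complex.I)) := by
    rw [Complex.exp_int_mul, Complex.exp_pi_mul_I]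
  rw [h1, jacobiTheta₂_term, ← Complex.exp_add, ← Complex.exp_add, ← Complex.exp_add]
  congr 1
  ring


lemma ratio_eq (a τ : ℂ) (hτ : τ ≠ 0) (hsn : Complex.sin (a*(π:ℂ)) ≠ 0) :
    theta11 τ (a*τ) /
      (-((-Complex.I*τ) ^ (-(1/2) : ℂ)) * (2 * Complex.I * Complex.sin (a*(π:ℂ))) *
        Complex.exp (-((π:ℂ)*Complex.I)/(4*τ)))
    = Complex.I * Complex.exp (-(π:ℂ)*Complex.I*a^2*τ - (π:ℂ)*Complex.I*a) /
        (2 * Complex.sin (a*(π:ℂ))) *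
      jacobiTheta₂ (a + 1/2 + 1/(2*τ)) (-1/τ) := by
  have hs0 : (-Complex.I*τ) ≠ 0 := mul_ne_zero (neg_ne_zero.mpr Complex.I_ne_zero) hτ
  have hpow : ((-Complex.I*τ) : ℂ)^((1:ℂ)/2) ≠ 0 := by
    simp [Complex.cpow_eq_zero_iff, hτ]
  rw [lemA, jacobiTheta₂_functional_equation (a*τ + (1+τ)/2) τ,
    show (a*τ + (1+τ)/2)/τ = a + 1/2 + 1/(2*τ) from by field_simp; ring,
    Complex.cpow_neg]
  have hI : Complex.exp (-((π:ℂ)*Complex.I)/2) = -Complex.I := by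
    rw [show -((π:ℂ)*Complex.I)/2 = -((π:ℂ)/2*Complex.I) by ring, Complex.exp_neg,
      Complex.exp_mul_I, Complex.cos_pi_div_two, Complex.sin_pi_div_two]
    simp [Complex.inv_I]
  have hE : Complex.exp ((π:ℂ)*Complex.I*τ/4 + (π:ℂ)*Complex.I*(a*τ)) *
      Complex.exp (-(π:ℂ)*Complex.I*(a*τ + (1+τ)/2)^2/τ)
      = -Complex.I * (Complex.exp (-((π:ℂ)*Complex.I)/(4*τ)) *
        Complex.exp (-(π:ℂ)*Complex.I*a^2*τ - (π:ℂ)*Complex.I*a)) := by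
    rw [← hI, ← Complex.exp_add, ← Complex.exp_add, ← Complex.exp_add]
    congr 1
    field_simp
    ring
  set s := ((-Complex.I*τ) : ℂ)^((1:ℂ)/2) with hsdef
  set E1 := Complex.exp ((π:ℂ)*Complex.I*τ/4 + (π:ℂ)*Complex.I*(a*τ)) with hE1
  set E2 := Complex.exp (-(π:ℂ)*Complex.I*(a*τ + (1+τ)/2)^2/τ) with hE2
  set E3 := Complex.exp (-((π:ℂ)*Complex.I)/(4*τ)) with hE3
  set E4 := Complex.exp (-(π:ℂ)*Complex.I*a^2*τ - (π:ℂ)*Complex.I*a) with hE4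
  set J := jacobiTheta₂ (a + 1/2 + 1/(2*τ)) (-1/τ) with hJ
  have hE3' : E3 ≠ 0 := Complex.exp_ne_zero _
  field_simp
  linear_combination (-J) * hE

lemma lemB (a : ℂ) :
    Tendsto (fun T : ℝ => jacobiTheta₂ (a + 1/2 + 1/(2*(Complex.I*T))) (-1/(Complex.I*T)))
      (𝓝[>] (0:ℝ)) (𝓝 (1 - Complex.exp (2*(π:ℂ)*Complex.I*a))) := by
  set f : ℝ → ℤ → ℂ := fun T n =>
    jacobiTheta₂_term n (a + 1/2 + 1/(2*(Complex.I*T))) (-1/(Complex.I*T)) with hf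
  set g : ℤ → ℂ := fun n => if n = 0 then 1 else
    (if n = 1 then Complex.exp (2*(π:ℂ)*Complex.I*(a+1/2)) else 0) with hgdef
  set bound : ℤ → ℝ := fun n =>
    ‖jacobiTheta₂_term n (((a.im:ℂ) - 1/2) * Complex.I) Complex.I‖ with hbd
  have hbound_eq : ∀ n : ℤ, bound n
      = Real.exp (-2*π*n*a.im) * Real.exp (-(π*((n:ℝ)^2 - n))) := by
    intro n
    simp only [hbd]
    rw [norm_jacobiTheta₂_term, ← Real.exp_add]
    congr 1
    simp only [Complex.mul_I_im, Complex.sub_re, Complex.ofReal_re, Complex.I_im]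
    norm_num
    ring
  have h_sum : Summable bound := by
    simp only [hbd]
    exact (summable_norm_iff.mpr
      ((summable_jacobiTheta₂_term_iff _ _).mpr (by simp)))
  have hnorm : ∀ n : ℤ, ‖Complex.exp (2*(π:ℂ)*Complex.I*(n:ℂ)*(a + 1/2))‖
      = Real.exp (-2*π*n*a.im) := by
    intro n
    have hw : (2*(π:ℂ)*Complex.I*(n:ℂ)*(a + 1/2)) = (((2*π*n : ℝ)):ℂ) * (a+1/2) * Complex.I := by
      push_cast; ring
    rw [Complex.norm_exp, hw, Complex.mul_I_re, Complex.im_ofReal_mul]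
    congr 1
    simp only [Complex.add_im]
    norm_num
  have hsq : ∀ n : ℤ, n ≠ 0 → n ≠ 1 → (1:ℝ) ≤ (n:ℝ)^2 - n := by
    intro n h0 h1
    have hn : (1:ℤ) ≤ n^2 - n := by
      rcases lt_or_ge n 0 with h | h
      · nlinarith
      · have h2 : 2 ≤ n := by omega
        nlinarith
    exact_mod_cast hn
  have hsq0 : ∀ n : ℤ, (0:ℝ) ≤ (n:ℝ)^2 - n := by
    intro n
    rcases eq_or_ne n 0 with rfl | h0
    · norm_num
    rcases eq_or_ne n 1 with rfl | h1
    · norm_num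
    · linarith [hsq n h0 h1]
  have h_bound : ∀ᶠ T in 𝓝[>] (0:ℝ), ∀ n, ‖f T n‖ ≤ bound n := by
    filter_upwards [Ioc_mem_nhdsGT (zero_lt_one' ℝ)] with T hT n
    have : f T n = jacobiTheta₂_term n (a + 1/2 + 1/(2*(Complex.I*T))) (-1/(Complex.I*T)) := rfl
    rw [this, termf a hT.1 n, hbound_eq n, norm_mul, hnorm n,
      Complex.norm_real, Real.norm_eq_abs, Real.abs_exp]
    apply mul_le_mul_of_nonneg_left _ (Real.exp_nonneg _)
    rw [Real.exp_le_exp, neg_div, neg_le_neg_iff]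
    exact le_div_self (mul_nonneg Real.pi_pos.le (hsq0 n)) hT.1 hT.2
  have hab : ∀ n : ℤ, Tendsto (f · n) (𝓝[>] (0:ℝ)) (𝓝 (g n)) := by
    intro n
    have hev : ∀ᶠ T in 𝓝[>] (0:ℝ), f T n
        = Complex.exp (2*(π:ℂ)*Complex.I*(n:ℂ)*(a + 1/2)) *
          (Real.exp (-(π*((n:ℝ)^2 - n))/T) : ℂ) := by
      filter_upwards [self_mem_nhdsWithin] with T hT
      exact termf a hT n
    rcases eq_or_ne n 0 with rfl | h0
    · have hc : ∀ᶠ T in 𝓝[>] (0:ℝ), g 0 = f T 0 := by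
        filter_upwards [hev] with T h
        rw [h]
        simp only [hgdef]
        norm_num
      exact Tendsto.congr' hc tendsto_const_nhds
    rcases eq_or_ne n 1 with rfl | h1
    · have hc : ∀ᶠ T in 𝓝[>] (0:ℝ), g 1 = f T 1 := by
        filter_upwards [hev] with T h
        rw [h]
        simp only [hgdef]
        norm_num
      exact Tendsto.congr' hc tendsto_const_nhds
    · have hc : (0:ℝ) < π * ((n:ℝ)^2 - n) := by
        nlinarith [hsq n h0 h1, Real.pi_pos]
      have h1' : Tendsto (fun T : ℝ => -(π * ((n:ℝ)^2 - n))/T) (𝓝[>] (0:ℝ)) atBot := by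
        have h0' : Tendsto (fun T : ℝ => (π * ((n:ℝ)^2 - n)) * T⁻¹) (𝓝[>] (0:ℝ)) atTop :=
          Tendsto.const_mul_atTop hc tendsto_inv_nhdsGT_zero
        have h0'' := tendsto_neg_atTop_atBot.comp h0'
        simp only [Function.comp_def, ← div_eq_mul_inv, ← neg_div] at h0''
        exact h0''
      have h2' : Tendsto (fun T : ℝ => ((Real.exp (-(π*((n:ℝ)^2 - n))/T)):ℂ))
          (𝓝[>] (0:ℝ)) (𝓝 0) := by
        have hr : Tendsto (fun T : ℝ => Real.exp (-(π*((n:ℝ)^2 - n))/T)) (𝓝[>] (0:ℝ))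
            (𝓝 (0:ℝ)) := (Real.tendsto_exp_atBot).comp h1'
        have h4' := (Complex.continuous_ofReal.tendsto (0:ℝ)).comp hr
        simpa [Function.comp_def] using h4'
      refine Tendsto.congr' (hev.mono fun T h => h.symm) ?_
      have hmul := (tendsto_const_nhds
        (x := Complex.exp (2*(π:ℂ)*Complex.I*(n:ℂ)*(a + 1/2))) (f := 𝓝[>] (0:ℝ))).mul h2'
      rw [mul_zero] at hmul
      simpa [hgdef, h0, h1] using hmul
  have key := tendsto_tsum_of_dominated_convergence h_sum hab h_bound
  have hgsum : ∑' n, g n = 1 - Complex.exp (2*(π:ℂ)*Complex.I*a) := by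
    rw [tsum_eq_sum (s := ({0, 1} : Finset ℤ))
      (by intro b hb; simp at hb; simp [hgdef, hb.1, hb.2])]
    rw [Finset.sum_insert (by norm_num), Finset.sum_singleton]
    simp only [hgdef, if_pos rfl, if_neg one_ne_zero]
    have h5 : 2*(π:ℂ)*Complex.I*(a+1/2) = 2*(π:ℂ)*Complex.I*a + π*Complex.I := by ring
    rw [h5, Complex.exp_add, Complex.exp_pi_mul_I]
    ring_nf
    norm_num
    try ring
  rw [hgsum] at key
  exact key

theorem stmt18 (a : ℂ) (ha : Complex.sin (a*(π:ℂ)) ≠ 0) :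
    Filter.Tendsto (fun T : ℝ =>
        theta11 (Complex.I*T) (a*(Complex.I*T)) /
          (-((-Complex.I*(Complex.I*(T:ℂ))) ^ (-(1/2) : ℂ)) * (2 * Complex.I * Complex.sin (a*(π:ℂ))) *
            Complex.exp (-((π:ℂ)*Complex.I)/(4*(Complex.I*(T:ℂ))))))
      (nhdsWithin 0 (Set.Ioi 0)) (nhds 1) := by
  have hEt : Tendsto (fun T : ℝ => Complex.I *
      Complex.exp (-(π:ℂ)*Complex.I*a^2*(Complex.I*T) - (π:ℂ)*Complex.I*a) /
      (2 * Complex.sin (a*(π:ℂ))))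
      (𝓝[>] (0:ℝ))
      (𝓝 (Complex.I * Complex.exp (-(π:ℂ)*Complex.I*a) / (2 * Complex.sin (a*(π:ℂ))))) := by
    have hcont : Continuous fun T : ℝ => Complex.I *
        Complex.exp (-(π:ℂ)*Complex.I*a^2*(Complex.I*T) - (π:ℂ)*Complex.I*a) /
        (2 * Complex.sin (a*(π:ℂ))) := by
      apply Continuous.div_const
      apply continuous_const.mul
      apply Complex.continuous_exp.comp
      apply Continuous.sub _ continuous_const
      exact continuous_const.mul (continuous_const.mul Complex.continuous_ofReal)
    have h0 : Tendsto (fun T : ℝ => Complex.I *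
        Complex.exp (-(π:ℂ)*Complex.I*a^2*(Complex.I*T) - (π:ℂ)*Complex.I*a) /
        (2 * Complex.sin (a*(π:ℂ)))) (𝓝[>] (0:ℝ))
        (𝓝 (Complex.I * Complex.exp (-(π:ℂ)*Complex.I*a^2*(Complex.I*((0:ℝ):ℝ)) - (π:ℂ)*Complex.I*a) /
          (2 * Complex.sin (a*(π:ℂ))))) := hcont.continuousWithinAt
    convert h0 using 3
    norm_num
  have hprod := hEt.mul (lemB a)
  have hval : Complex.I * Complex.exp (-(π:ℂ)*Complex.I*a) / (2 * Complex.sin (a*(π:ℂ))) *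
      (1 - Complex.exp (2*(π:ℂ)*Complex.I*a)) = 1 := by
    have h1 : Complex.exp (-(π:ℂ)*Complex.I*a) = Complex.exp (-((a*(π:ℂ))*Complex.I)) := by
      congr 1; ring
    have h2 : Complex.exp (2*(π:ℂ)*Complex.I*a) = (Complex.exp ((a*(π:ℂ))*Complex.I))^2 := by
      rw [sq, ← Complex.exp_add]; congr 1; ring
    have huv : Complex.exp ((a*(π:ℂ))*Complex.I) * Complex.exp (-((a*(π:ℂ))*Complex.I)) = 1 := by
      rw [← Complex.exp_add]; simp
    have hsin : Complex.exp (-((a*(π:ℂ))*Complex.I)) - Complex.exp ((a*(π:ℂ))*Complex.I)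
        = -2*Complex.sin (a*(π:ℂ))*Complex.I := by
      rw [show -((a*(π:ℂ))*Complex.I) = (-(a*(π:ℂ)))*Complex.I by ring,
        Complex.exp_mul_I, Complex.exp_mul_I, Complex.cos_neg, Complex.sin_neg]
      ring
    rw [h1, h2]
    field_simp
    linear_combination (norm := ring_nf) (Complex.I) * hsin
      - (Complex.I * Complex.exp ((a*(π:ℂ))*Complex.I)) * huv
      - (2*Complex.sin (a*(π:ℂ))) * Complex.I_sq
  rw [hval] at hprod
  refine Tendsto.congr' ?_ hprod
  filter_upwards [self_mem_nhdsWithin] with T hT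
  have hτ : (Complex.I*(T:ℝ) : ℂ) ≠ 0 :=
    mul_ne_zero Complex.I_ne_zero (Complex.ofReal_ne_zero.mpr (ne_of_gt hT))
  exact (ratio_eq a (Complex.I*(T:ℝ)) hτ ha).symm

end
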